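/- Let K ≥ 1, a ∈ ℝ^K, and let S ⊆ {1,…,K} be nonempty with min_{i∈S} a_i − max_{j∉S} a_j ≥ Δ. Then 0 ≤ log(Σ_{j=1}^K e^{a_j}) − log(Σ_{i∈S} e^{a_i}) ≤ (K − |S|)·e^{−Δ}/|S|. Consequently, writing ā = (1/|S|)·Σ_{i∈S} a_i and CE(softmax(a), Unif(S)) = log(Σ_{j=1}^K e^{a_j}) − ā for the cross-entropy of the softmax distribution against the uniform distribution on S, one has log(Σ_{i∈S} e^{a_i}) − ā ≤ CE(softmax(a), Unif(S)) ≤ log(Σ_{i∈S} e^{a_i}) − ā + (K − |S|)·e^{−Δ}/|S|, and moreover log(Σ_{i∈S} e^{a_i}) − ā ≥ log|S|. -/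

import Mathlib

/-- Under the softmax saturation gap `Δ` on a nonempty set `S`:
`0 ≤ log Σ_j e^{a_j} − log Σ_{i∈S} e^{a_i} ≤ (K−|S|)e^{−Δ}/|S|`; the cross-entropy of
`softmax(a)` against `Unif(S)` equals `log Σ_j e^{a_j} − ā`, hence is sandwiched between
`log Σ_{i∈S} e^{a_i} − ā` and `log Σ_{i∈S} e^{a_i} − ā + (K−|S|)e^{−Δ}/|S|`, and moreover
`log Σ_{i∈S} e^{a_i} − ā ≥ log |S|`. -/
theorem stmt7 (K : ℕ) (hK : 1 ≤ K) (a : Fin K → ℝ)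
    (S : Finset (Fin K)) (hS : S.Nonempty) (Δ : ℝ)
    (hgap : ∀ i ∈ S, ∀ j ∉ S, Δ ≤ a i - a j)
    (abar CE : ℝ)
    (habar : abar = (S.card : ℝ)⁻¹ * ∑ i ∈ S, a i)
    (hCE : CE = -((S.card : ℝ)⁻¹ *
      ∑ i ∈ S, Real.log (Real.exp (a i) / ∑ j, Real.exp (a j)))) :
    (0 ≤ Real.log (∑ j, Real.exp (a j)) - Real.log (∑ i ∈ S, Real.exp (a i))) ∧
    (Real.log (∑ j, Real.exp (a j)) - Real.log (∑ i ∈ S, Real.exp (a i)) ≤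
        ((K : ℝ) - S.card) * Real.exp (-Δ) / S.card) ∧
    (CE = Real.log (∑ j, Real.exp (a j)) - abar) ∧
    (Real.log (∑ i ∈ S, Real.exp (a i)) - abar ≤ CE) ∧
    (CE ≤ Real.log (∑ i ∈ S, Real.exp (a i)) - abar +
        ((K : ℝ) - S.card) * Real.exp (-Δ) / S.card) ∧
    (Real.log (S.card : ℝ) ≤ Real.log (∑ i ∈ S, Real.exp (a i)) - abar) := by
  set T : ℝ := ∑ j, Real.exp (a j) with hT
  set E : ℝ := ∑ i ∈ S, Real.exp (a i) with hE
  have hsc : 0 < (S.card : ℝ) := by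
    exact_mod_cast Finset.card_pos.mpr hS
  have hEpos : 0 < E := Finset.sum_pos (fun i _ => Real.exp_pos _) hS
  have hTpos : 0 < T :=
    Finset.sum_pos (fun i _ => Real.exp_pos _) ⟨⟨0, hK⟩, Finset.mem_univ _⟩
  have hsplit : T = E + ∑ j ∈ Sᶜ, Real.exp (a j) := by
    rw [hT, hE, ← Finset.sum_add_sum_compl S]
  have hET : E ≤ T := by
    rw [hsplit]
    have : 0 ≤ ∑ j ∈ Sᶜ, Real.exp (a j) :=
      Finset.sum_nonneg fun j _ => (Real.exp_pos _).le
    linarith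
  have h1 : 0 ≤ Real.log T - Real.log E := by
    have := Real.log_le_log hEpos hET
    linarith
  -- per-element bound for j ∉ S
  have hper : ∀ j ∈ Sᶜ, Real.exp (a j) ≤ Real.exp (-Δ) * E / S.card := by
    intro j hj
    rw [Finset.mem_compl] at hj
    have hE' : (S.card : ℝ) * Real.exp (Δ + a j) ≤ E := by
      have : ∀ i ∈ S, Real.exp (Δ + a j) ≤ Real.exp (a i) := by
        intro i hi
        exact Real.exp_le_exp.mpr (by have := hgap i hi j hj; linarith)
      calc (S.card : ℝ) * Real.exp (Δ + a j)
          = ∑ _i ∈ S, Real.exp (Δ + a j) := by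
            rw [Finset.sum_const, nsmul_eq_mul]
        _ ≤ E := Finset.sum_le_sum this
    have hkey : Real.exp (a j) = Real.exp (-Δ) * Real.exp (Δ + a j) := by
      rw [← Real.exp_add]; ring_nf
    rw [hkey, div_eq_mul_inv, mul_assoc]
    have h2 : Real.exp (Δ + a j) ≤ E * (S.card : ℝ)⁻¹ := by
      rw [← div_eq_mul_inv, le_div_iff₀ hsc]
      linarith
    exact mul_le_mul_of_nonneg_left h2 (Real.exp_pos (-Δ)).le
  have hcompl : ∑ j ∈ Sᶜ, Real.exp (a j) ≤ (Sᶜ.card : ℝ) * (Real.exp (-Δ) * E / S.card) := by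
    have := Finset.sum_le_card_nsmul Sᶜ (fun j => Real.exp (a j))
      (Real.exp (-Δ) * E / S.card) hper
    simpa [nsmul_eq_mul] using this
  have hcardc : (Sᶜ.card : ℝ) = (K : ℝ) - S.card := by
    have : Sᶜ.card = K - S.card := by
      rw [Finset.card_compl, Fintype.card_fin]
    rw [this, Nat.cast_sub (by simpa using S.card_le_univ)]
  have h2 : Real.log T - Real.log E ≤ ((K : ℝ) - S.card) * Real.exp (-Δ) / S.card := by
    rw [← Real.log_div hTpos.ne' hEpos.ne']
    have hlog : Real.log (T / E) ≤ T / E - 1 :=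
      Real.log_le_sub_one_of_pos (div_pos hTpos hEpos)
    have : T / E - 1 ≤ ((K : ℝ) - S.card) * Real.exp (-Δ) / S.card := by
      rw [div_sub_one hEpos.ne', div_le_div_iff₀ hEpos hsc]
      have : (T - E) = ∑ j ∈ Sᶜ, Real.exp (a j) := by linarith [hsplit]
      rw [this]
      calc (∑ j ∈ Sᶜ, Real.exp (a j)) * (S.card : ℝ)
          ≤ ((K : ℝ) - S.card) * (Real.exp (-Δ) * E / S.card) * S.card := by
            apply mul_le_mul_of_nonneg_right _ hsc.le
            rw [← hcardc]; exact hcompl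
        _ = ((K : ℝ) - S.card) * Real.exp (-Δ) * E := by
            field_simp
    linarith
  have h3 : CE = Real.log T - abar := by
    rw [hCE, habar]
    have : ∀ i ∈ S, Real.log (Real.exp (a i) / T) = a i - Real.log T := by
      intro i _
      rw [Real.log_div (Real.exp_pos _).ne' hTpos.ne', Real.log_exp]
    rw [Finset.sum_congr rfl this, Finset.sum_sub_distrib, Finset.sum_const, nsmul_eq_mul]
    field_simp
    ring
  have h6 : Real.log (S.card : ℝ) ≤ Real.log E - abar := by
    -- E ≥ S.card * exp abar  via exp x ≥ 1 + x
    have hkey : (S.card : ℝ) * Real.exp abar ≤ E := by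
      have hpt : ∀ i ∈ S, 1 + (a i - abar) ≤ Real.exp (a i - abar) := by
        intro i _; linarith [Real.add_one_le_exp (a i - abar)]
      have hsum : ∑ i ∈ S, (1 + (a i - abar)) ≤ ∑ i ∈ S, Real.exp (a i - abar) :=
        Finset.sum_le_sum hpt
      have hl : ∑ i ∈ S, (1 + (a i - abar)) = (S.card : ℝ) := by
        rw [Finset.sum_add_distrib, Finset.sum_const, nsmul_eq_mul, Finset.sum_sub_distrib,
          Finset.sum_const, nsmul_eq_mul, habar]
        field_simp
        ring
      have hr : ∑ i ∈ S, Real.exp (a i - abar) = E * Real.exp (-abar) := by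
        rw [hE, Finset.sum_mul]
        exact Finset.sum_congr rfl fun i _ => by rw [← Real.exp_add]; ring_nf
      rw [hl, hr] at hsum
      have := mul_le_mul_of_nonneg_right hsum (Real.exp_pos abar).le
      rwa [mul_assoc, ← Real.exp_add, neg_add_cancel, Real.exp_zero, mul_one] at this
    have := Real.log_le_log (by positivity) hkey
    rw [Real.log_mul hsc.ne' (Real.exp_pos _).ne', Real.log_exp] at this
    linarith
  refine ⟨h1, h2, h3, by linarith, by linarith, h6⟩
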